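/- For the bi-objective problem OJZR with f1 = OneJump_k and f2 = ZeroRoyalRoad on bit-strings of length n = b·ℓ, where b > 1, k is an integer with 1 < k < n/2 and ℓ < k, and (n−k) mod ℓ = 0, the Pareto set equals exactly {1^n} ∪ { x : |x|_1 ≤ n−k and every block of x is an all-ones block or an all-zeros block }. -/
import Mathlib


open Finset

/-- Number of one-bits of a bit-string. -/
def onesCount {n : ℕ} (x : Fin n → Bool) : ℕ :=
  (Finset.univ.filter fun i => x i = true).card

/-- Number of zero-bits of a bit-string. -/
def zerosCount {n : ℕ} (x : Fin n → Bool) : ℕ :=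
  (Finset.univ.filter fun i => x i = false).card

/-- Number of leading one-bits. -/
def leadingOnes {n : ℕ} (x : Fin n → Bool) : ℕ :=
  (Finset.univ.filter fun i : Fin n => ∀ j : Fin n, j ≤ i → x j = true).card

/-- Number of trailing zero-bits. -/
def trailingZeroes {n : ℕ} (x : Fin n → Bool) : ℕ :=
  (Finset.univ.filter fun i : Fin n => ∀ j : Fin n, i ≤ j → x j = false).card

/-- `y` dominates `x` for the bi-objective maximisation problem `(f1, f2)`. -/
def dominates {n : ℕ} (f1 f2 : (Fin n → Bool) → ℕ) (y x : Fin n → Bool) : Prop :=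
  f1 x ≤ f1 y ∧ f2 x ≤ f2 y ∧ (f1 x < f1 y ∨ f2 x < f2 y)

/-- `x` is Pareto optimal: no solution dominates it. -/
def paretoOptimal {n : ℕ} (f1 f2 : (Fin n → Bool) → ℕ) (x : Fin n → Bool) : Prop :=
  ∀ y, ¬ dominates f1 f2 y x

/-- `x` is a non-global Pareto local optimum: not Pareto optimal, and not dominated by
any bit-string at Hamming distance exactly 1. -/
def nonGlobalParetoLocalOpt {n : ℕ} (f1 f2 : (Fin n → Bool) → ℕ) (x : Fin n → Bool) : Prop :=
  ¬ paretoOptimal f1 f2 x ∧ ∀ y, hammingDist y x = 1 → ¬ dominates f1 f2 y x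

/-- The ZeroJump function with jump parameter `k`. -/
def zeroJump (n k : ℕ) (x : Fin n → Bool) : ℕ :=
  if zerosCount x ≤ n - k ∨ x = (fun _ => false) then k + zerosCount x else n - zerosCount x

/-- The OneJump function with jump parameter `k`. -/
def oneJump (n k : ℕ) (x : Fin n → Bool) : ℕ :=
  if onesCount x ≤ n - k ∨ x = (fun _ => true) then k + onesCount x else n - onesCount x

/-- Block `j` (0-indexed) of the bit-string `x` (with `b` blocks of length `ℓ`) is all-ones. -/
def blockAllOnes (b ℓ : ℕ) (x : Fin (b * ℓ) → Bool) (j : Fin b) : Prop :=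
  ∀ i : Fin (b * ℓ), (i : ℕ) / ℓ = (j : ℕ) → x i = true

/-- Block `j` (0-indexed) of the bit-string `x` is all-zeros. -/
def blockAllZeros (b ℓ : ℕ) (x : Fin (b * ℓ) → Bool) (j : Fin b) : Prop :=
  ∀ i : Fin (b * ℓ), (i : ℕ) / ℓ = (j : ℕ) → x i = false

instance (b ℓ : ℕ) (x : Fin (b * ℓ) → Bool) (j : Fin b) : Decidable (blockAllOnes b ℓ x j) := by
  unfold blockAllOnes; infer_instance

instance (b ℓ : ℕ) (x : Fin (b * ℓ) → Bool) (j : Fin b) : Decidable (blockAllZeros b ℓ x j) := by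
  unfold blockAllZeros; infer_instance

/-- OneRoyalRoad: `ℓ` times the number of all-ones blocks. -/
def oneRoyalRoad (b ℓ : ℕ) (x : Fin (b * ℓ) → Bool) : ℕ :=
  ℓ * (Finset.univ.filter fun j : Fin b => blockAllOnes b ℓ x j).card

/-- ZeroRoyalRoad: `ℓ` times the number of all-zeros blocks. -/
def zeroRoyalRoad (b ℓ : ℕ) (x : Fin (b * ℓ) → Bool) : ℕ :=
  ℓ * (Finset.univ.filter fun j : Fin b => blockAllZeros b ℓ x j).card

/-- Number of one-bits in block `j` of `x`. -/
def blockOnes (b ℓ : ℕ) (x : Fin (b * ℓ) → Bool) (j : Fin b) : ℕ :=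
  (Finset.univ.filter fun i : Fin (b * ℓ) => (i : ℕ) / ℓ = (j : ℕ) ∧ x i = true).card

/-- Number of zero-bits in block `j` of `x`. -/
def blockZeros (b ℓ : ℕ) (x : Fin (b * ℓ) → Bool) (j : Fin b) : ℕ :=
  (Finset.univ.filter fun i : Fin (b * ℓ) => (i : ℕ) / ℓ = (j : ℕ) ∧ x i = false).card



lemma aux_card_val_lt (n t : ℕ) (ht : t ≤ n) :
    ((univ : Finset (Fin n)).filter fun i : Fin n => (i : ℕ) < t).card = t := by
  classical
  have : ((univ : Finset (Fin n)).filter fun i : Fin n => (i : ℕ) < t)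
      = Finset.map (Fin.castLEEmb ht) univ := by
    ext i
    simp only [mem_filter, mem_univ, true_and, Finset.mem_map, Fin.castLEEmb_apply]
    constructor
    · intro h; exact ⟨⟨(i : ℕ), h⟩, by ext; simp⟩
    · rintro ⟨j, rfl⟩; simpa using j.isLt
  rw [this, Finset.card_map, Finset.card_univ, Fintype.card_fin]

lemma aux_div_lt_b {b ℓ : ℕ} (hℓ : 0 < ℓ) (i : Fin (b * ℓ)) : (i : ℕ) / ℓ < b :=
  (Nat.div_lt_iff_lt_mul hℓ).mpr (by simpa [Nat.mul_comm] using i.isLt)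

lemma aux_card_fiber {b ℓ : ℕ} (hℓ : 0 < ℓ) (j : ℕ) (hj : j < b) :
    ((univ : Finset (Fin (b * ℓ))).filter fun i : Fin (b * ℓ) => (i : ℕ) / ℓ = j).card = ℓ := by
  classical
  have hmul : j * ℓ + ℓ = (j + 1) * ℓ := by ring
  have hsub : ((univ : Finset (Fin (b * ℓ))).filter fun i : Fin (b * ℓ) => (i : ℕ) < j * ℓ)
      ⊆ ((univ : Finset (Fin (b * ℓ))).filter fun i : Fin (b * ℓ) => (i : ℕ) < (j + 1) * ℓ) := by
    intro i hi
    simp only [mem_filter, mem_univ, true_and] at *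
    omega
  have hset : ((univ : Finset (Fin (b * ℓ))).filter fun i : Fin (b * ℓ) => (i : ℕ) / ℓ = j)
      = ((univ : Finset (Fin (b * ℓ))).filter fun i : Fin (b * ℓ) => (i : ℕ) < (j + 1) * ℓ)
        \ ((univ : Finset (Fin (b * ℓ))).filter fun i : Fin (b * ℓ) => (i : ℕ) < j * ℓ) := by
    ext i
    simp only [mem_filter, mem_sdiff, mem_univ, true_and, not_lt]
    constructor
    · intro h
      have h1 : (i : ℕ) / ℓ < j + 1 := by omega
      have h2 : j ≤ (i : ℕ) / ℓ := by omega
      exact ⟨(Nat.div_lt_iff_lt_mul hℓ).mp h1, (Nat.le_div_iff_mul_le hℓ).mp h2⟩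
    · intro ⟨h1, h2⟩
      have hub : (i : ℕ) / ℓ < j + 1 := (Nat.div_lt_iff_lt_mul hℓ).mpr h1
      have hlb : j ≤ (i : ℕ) / ℓ := (Nat.le_div_iff_mul_le hℓ).mpr h2
      omega
  have hjb : (j + 1) * ℓ ≤ b * ℓ := Nat.mul_le_mul_right _ hj
  rw [hset, Finset.card_sdiff_of_subset hsub, aux_card_val_lt _ _ hjb,
    aux_card_val_lt _ _ (by omega : j * ℓ ≤ b * ℓ)]
  omega

lemma aux_onesCount_add_zerosCount {n : ℕ} (x : Fin n → Bool) :
    onesCount x + zerosCount x = n := by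
  classical
  have h := Finset.card_filter_add_card_filter_not
    (s := (univ : Finset (Fin n))) (p := fun i => x i = true)
  simp only [Finset.card_univ, Fintype.card_fin] at h
  rw [onesCount, zerosCount]
  have h2 : (univ.filter fun i : Fin n => x i = false)
      = (univ.filter fun i : Fin n => ¬ x i = true) := by
    ext i; simp
  rw [h2, h]
lemma aux_onesCount_eq_sum {b ℓ : ℕ} (hℓ : 0 < ℓ) (x : Fin (b * ℓ) → Bool) :
    onesCount x = ∑ j : Fin b, blockOnes b ℓ x j := by
  classical
  unfold onesCount blockOnes
  rw [Finset.card_eq_sum_card_fiberwise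
    (f := fun i : Fin (b * ℓ) => (⟨(i : ℕ) / ℓ, aux_div_lt_b hℓ i⟩ : Fin b))
    (t := univ) (fun _ _ => mem_univ _)]
  refine Finset.sum_congr rfl fun j _ => ?_
  congr 1
  ext i
  simp [Fin.ext_iff, and_comm]

lemma aux_zerosCount_eq_sum {b ℓ : ℕ} (hℓ : 0 < ℓ) (x : Fin (b * ℓ) → Bool) :
    zerosCount x = ∑ j : Fin b, blockZeros b ℓ x j := by
  classical
  unfold zerosCount blockZeros
  rw [Finset.card_eq_sum_card_fiberwise
    (f := fun i : Fin (b * ℓ) => (⟨(i : ℕ) / ℓ, aux_div_lt_b hℓ i⟩ : Fin b))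
    (t := univ) (fun _ _ => mem_univ _)]
  refine Finset.sum_congr rfl fun j _ => ?_
  congr 1
  ext i
  simp [Fin.ext_iff, and_comm]

lemma aux_blockOnes_add_blockZeros {b ℓ : ℕ} (hℓ : 0 < ℓ) (x : Fin (b * ℓ) → Bool) (j : Fin b) :
    blockOnes b ℓ x j + blockZeros b ℓ x j = ℓ := by
  classical
  set F := (univ : Finset (Fin (b * ℓ))).filter fun i : Fin (b * ℓ) => (i : ℕ) / ℓ = (j : ℕ) with hF
  have h1 : blockOnes b ℓ x j = (F.filter fun i => x i = true).card := by
    unfold blockOnes; rw [hF, Finset.filter_filter]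
  have h2 : blockZeros b ℓ x j = (F.filter fun i => ¬ (x i = true)).card := by
    unfold blockZeros; rw [hF, Finset.filter_filter]; congr 1; ext i; simp
  rw [h1, h2, Finset.card_filter_add_card_filter_not, hF, aux_card_fiber hℓ (j : ℕ) j.isLt]

lemma aux_blockZeros_eq_zero_iff {b ℓ : ℕ} (x : Fin (b * ℓ) → Bool) (j : Fin b) :
    blockZeros b ℓ x j = 0 ↔ blockAllOnes b ℓ x j := by
  classical
  unfold blockZeros blockAllOnes
  rw [Finset.card_eq_zero, Finset.filter_eq_empty_iff]
  constructor
  · intro h i hi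
    have := h (Finset.mem_univ i)
    simp only [hi, true_and] at this
    simpa using this
  · intro h i _
    simp only [not_and]
    intro hi
    simp [h i hi]

lemma aux_blockOnes_eq_zero_iff {b ℓ : ℕ} (x : Fin (b * ℓ) → Bool) (j : Fin b) :
    blockOnes b ℓ x j = 0 ↔ blockAllZeros b ℓ x j := by
  classical
  unfold blockOnes blockAllZeros
  rw [Finset.card_eq_zero, Finset.filter_eq_empty_iff]
  constructor
  · intro h i hi
    have := h (Finset.mem_univ i)
    simp only [hi, true_and] at this
    simpa using this
  · intro h i _
    simp only [not_and]
    intro hi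
    simp [h i hi]
/-- number of all-zeros blocks -/
def zcnt (b ℓ : ℕ) (x : Fin (b * ℓ) → Bool) : ℕ :=
  ((univ : Finset (Fin b)).filter fun j => blockAllZeros b ℓ x j).card

lemma aux_ite_sum {b ℓ : ℕ} (x : Fin (b * ℓ) → Bool) :
    (∑ j : Fin b, if blockAllZeros b ℓ x j then 0 else ℓ)
      + ℓ * zcnt b ℓ x = b * ℓ := by
  classical
  have h1 : (∑ j : Fin b, if blockAllZeros b ℓ x j then 0 else ℓ)
      = ((univ : Finset (Fin b)).filter fun j => ¬ blockAllZeros b ℓ x j).card * ℓ := by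
    rw [Finset.sum_ite]
    simp [Finset.sum_const, smul_eq_mul]
  have h2 := Finset.card_filter_add_card_filter_not
    (s := (univ : Finset (Fin b))) (p := fun j => blockAllZeros b ℓ x j)
  simp only [Finset.card_univ, Fintype.card_fin] at h2
  rw [h1]
  unfold zcnt
  set c := ((univ : Finset (Fin b)).filter fun j => ¬ blockAllZeros b ℓ x j).card
  set z := ((univ : Finset (Fin b)).filter fun j => blockAllZeros b ℓ x j).card
  have : c * ℓ + ℓ * z = (c + z) * ℓ := by ring
  rw [this]
  have : c + z = b := by omega
  rw [this]

lemma aux_M1 {b ℓ : ℕ} (hℓ : 0 < ℓ) (x : Fin (b * ℓ) → Bool) :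
    onesCount x + ℓ * zcnt b ℓ x ≤ b * ℓ := by
  classical
  have hle : onesCount x ≤ ∑ j : Fin b, if blockAllZeros b ℓ x j then 0 else ℓ := by
    rw [aux_onesCount_eq_sum hℓ x]
    refine Finset.sum_le_sum fun j _ => ?_
    by_cases h : blockAllZeros b ℓ x j
    · simp [h, (aux_blockOnes_eq_zero_iff x j).mpr h]
    · simp only [h, if_false]
      have := aux_blockOnes_add_blockZeros hℓ x j
      omega
  have := aux_ite_sum (b := b) (ℓ := ℓ) x
  omega

lemma aux_M2 {b ℓ : ℕ} (hℓ : 0 < ℓ) (x : Fin (b * ℓ) → Bool) (j₀ : Fin b)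
    (h1 : ¬ blockAllOnes b ℓ x j₀) (h2 : ¬ blockAllZeros b ℓ x j₀) :
    onesCount x + ℓ * zcnt b ℓ x < b * ℓ := by
  classical
  have hlt : onesCount x < ∑ j : Fin b, if blockAllZeros b ℓ x j then 0 else ℓ := by
    rw [aux_onesCount_eq_sum hℓ x]
    refine Finset.sum_lt_sum (fun j _ => ?_) ⟨j₀, Finset.mem_univ _, ?_⟩
    · by_cases h : blockAllZeros b ℓ x j
      · simp [h, (aux_blockOnes_eq_zero_iff x j).mpr h]
      · simp only [h, if_false]
        have := aux_blockOnes_add_blockZeros hℓ x j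
        omega
    · simp only [h2, if_false]
      have hs := aux_blockOnes_add_blockZeros hℓ x j₀
      have : blockZeros b ℓ x j₀ ≠ 0 := fun h => h1 ((aux_blockZeros_eq_zero_iff x j₀).mp h)
      omega
  have := aux_ite_sum (b := b) (ℓ := ℓ) x
  omega

lemma aux_mono_eq {b ℓ : ℕ} (hℓ : 0 < ℓ) (x : Fin (b * ℓ) → Bool)
    (h : ∀ j : Fin b, blockAllOnes b ℓ x j ∨ blockAllZeros b ℓ x j) :
    onesCount x + ℓ * zcnt b ℓ x = b * ℓ := by
  classical
  have heq : onesCount x = ∑ j : Fin b, if blockAllZeros b ℓ x j then 0 else ℓ := by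
    rw [aux_onesCount_eq_sum hℓ x]
    refine Finset.sum_congr rfl fun j _ => ?_
    by_cases hz : blockAllZeros b ℓ x j
    · simp [hz, (aux_blockOnes_eq_zero_iff x j).mpr hz]
    · have ho : blockAllOnes b ℓ x j := (h j).resolve_right hz
      have hbz : blockZeros b ℓ x j = 0 := (aux_blockZeros_eq_zero_iff x j).mpr ho
      have := aux_blockOnes_add_blockZeros hℓ x j
      simp only [hz, if_false]
      omega
  have := aux_ite_sum (b := b) (ℓ := ℓ) x
  omega

lemma aux_zeros_ge {b ℓ : ℕ} (hℓ : 0 < ℓ) (x : Fin (b * ℓ) → Bool) :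
    ℓ * zcnt b ℓ x ≤ zerosCount x := by
  classical
  have h1 : ℓ * zcnt b ℓ x = ∑ j : Fin b, if blockAllZeros b ℓ x j then ℓ else 0 := by
    unfold zcnt
    rw [Finset.sum_ite, Finset.sum_const, Finset.sum_const]
    simp [mul_comm]
  rw [h1, aux_zerosCount_eq_sum hℓ x]
  refine Finset.sum_le_sum fun j _ => ?_
  by_cases h : blockAllZeros b ℓ x j
  · have hbo : blockOnes b ℓ x j = 0 := (aux_blockOnes_eq_zero_iff x j).mpr h
    have := aux_blockOnes_add_blockZeros hℓ x j
    simp only [h, if_true]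
    omega
  · simp [h]

/-- the "first p blocks ones, rest zeros" pattern -/
def ypat (b ℓ p : ℕ) : Fin (b * ℓ) → Bool := fun i => decide ((i : ℕ) / ℓ < p)

lemma aux_ypat_ones {b ℓ : ℕ} (hℓ : 0 < ℓ) (p : ℕ) (hp : p ≤ b) :
    onesCount (ypat b ℓ p) = p * ℓ := by
  classical
  unfold onesCount ypat
  have : ((univ : Finset (Fin (b * ℓ))).filter fun i : Fin (b * ℓ) => decide ((i : ℕ) / ℓ < p) = true)
      = ((univ : Finset (Fin (b * ℓ))).filter fun i : Fin (b * ℓ) => (i : ℕ) < p * ℓ) := by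
    ext i
    simp [Nat.div_lt_iff_lt_mul hℓ]
  rw [this, aux_card_val_lt _ _ (Nat.mul_le_mul_right _ hp)]

lemma aux_fiber_nonempty {b ℓ : ℕ} (hℓ : 0 < ℓ) (j : Fin b) :
    ∃ i : Fin (b * ℓ), (i : ℕ) / ℓ = (j : ℕ) := by
  classical
  have h := aux_card_fiber (b := b) hℓ (j : ℕ) j.isLt
  have : ((univ : Finset (Fin (b * ℓ))).filter fun i : Fin (b * ℓ) => (i : ℕ) / ℓ = (j : ℕ)).Nonempty := by
    rw [← Finset.card_pos, h]; exact hℓ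
  obtain ⟨i, hi⟩ := this
  exact ⟨i, (Finset.mem_filter.mp hi).2⟩

lemma aux_ypat_zcnt {b ℓ : ℕ} (hℓ : 0 < ℓ) (p : ℕ) (hp : p ≤ b) :
    zcnt b ℓ (ypat b ℓ p) + p = b := by
  classical
  have hiff : ∀ j : Fin b, blockAllZeros b ℓ (ypat b ℓ p) j ↔ ¬ ((j : ℕ) < p) := by
    intro j
    constructor
    · intro h hjp
      obtain ⟨i, hi⟩ := aux_fiber_nonempty hℓ j
      have := h i hi
      rw [ypat] at this
      simp only [hi] at this
      simp [hjp] at this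
    · intro h i hi
      rw [ypat]
      simp [hi, h]
  have h1 : zcnt b ℓ (ypat b ℓ p)
      = ((univ : Finset (Fin b)).filter fun j : Fin b => ¬ ((j : ℕ) < p)).card := by
    unfold zcnt
    congr 1
    ext j
    simp [hiff j]
  have h2 := Finset.card_filter_add_card_filter_not
    (s := (univ : Finset (Fin b))) (p := fun j : Fin b => (j : ℕ) < p)
  simp only [Finset.card_univ, Fintype.card_fin] at h2
  have h3 := aux_card_val_lt b p hp
  omega

lemma aux_const_true_ones {n : ℕ} : onesCount (fun _ : Fin n => true) = n := by
  simp [onesCount]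

lemma aux_ones_lt_of_ne {n : ℕ} (x : Fin n → Bool) (h : x ≠ fun _ => true) :
    onesCount x < n := by
  classical
  have : ∃ i, x i = false := by
    by_contra hc
    push_neg at hc
    exact h (funext fun i => by have := hc i; cases hxi : x i <;> simp_all)
  obtain ⟨i, hi⟩ := this
  have hz : 0 < zerosCount x := by
    rw [zerosCount, Finset.card_pos]
    exact ⟨i, Finset.mem_filter.mpr ⟨Finset.mem_univ _, hi⟩⟩
  have := aux_onesCount_add_zerosCount x
  omega

lemma aux_zcnt_true {b ℓ : ℕ} (hℓ : 0 < ℓ) : zcnt b ℓ (fun _ => true) = 0 := by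
  classical
  unfold zcnt
  rw [Finset.card_eq_zero, Finset.filter_eq_empty_iff]
  intro j _ hz
  obtain ⟨i, hi⟩ := aux_fiber_nonempty hℓ j
  simpa using hz i hi
lemma aux_ceil (ℓ ox : ℕ) (hℓ : 0 < ℓ) :
    ∃ p : ℕ, ox ≤ p * ℓ ∧ ∀ c : ℕ, ox ≤ c * ℓ → p ≤ c := by
  by_cases hd : ℓ ∣ ox
  · refine ⟨ox / ℓ, by rw [Nat.div_mul_cancel hd], fun c hc => ?_⟩
    have h : ox / ℓ ≤ c * ℓ / ℓ := Nat.div_le_div_right hc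
    rwa [Nat.mul_div_cancel _ hℓ] at h
  · have hq := Nat.div_add_mod ox ℓ
    have hr : ox % ℓ < ℓ := Nat.mod_lt _ hℓ
    have hr0 : ox % ℓ ≠ 0 := fun h => hd (Nat.dvd_of_mod_eq_zero h)
    refine ⟨ox / ℓ + 1, ?_, fun c hc => ?_⟩
    · have h : (ox / ℓ + 1) * ℓ = ℓ * (ox / ℓ) + ℓ := by ring
      omega
    · by_contra hcon
      push_neg at hcon
      have h1 : c * ℓ ≤ (ox / ℓ) * ℓ := Nat.mul_le_mul_right _ (by omega)
      have h2 : (ox / ℓ) * ℓ = ℓ * (ox / ℓ) := Nat.mul_comm _ _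
      omega

/-- For OJZR (f1 = OneJump_k, f2 = ZeroRoyalRoad) on bit-strings of length
n = b·ℓ with b > 1, 1 < k < n/2, ℓ < k and (n-k) mod ℓ = 0, the Pareto set is exactly
{1^n} ∪ { x : |x|_1 ≤ n-k and every block of x is all-ones or all-zeros }. -/
theorem OJZR_pareto_set_div (b ℓ k : ℕ) (hb : 1 < b) (hk : 1 < k) (hkn : 2 * k < b * ℓ)
    (hℓk : ℓ < k) (hmod : (b * ℓ - k) % ℓ = 0) (x : Fin (b * ℓ) → Bool) :
    paretoOptimal (oneJump (b * ℓ) k) (zeroRoyalRoad b ℓ) x ↔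
      x = (fun _ => true) ∨
        (onesCount x ≤ b * ℓ - k ∧
          ∀ j : Fin b, blockAllOnes b ℓ x j ∨ blockAllZeros b ℓ x j) := by
  have hℓ : 0 < ℓ := by
    rcases Nat.eq_zero_or_pos ℓ with h | h
    · subst h; simp at hkn
    · exact h
  have hkℓn : k < b * ℓ := by omega
  have hzrr : ∀ w : Fin (b * ℓ) → Bool, zeroRoyalRoad b ℓ w = ℓ * zcnt b ℓ w := fun _ => rfl
  constructor
  · -- forward
    intro hpar
    by_contra hset
    have hx1 : x ≠ (fun _ => true) := fun h => hset (Or.inl h)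
    have hoxlt : onesCount x < b * ℓ := aux_ones_lt_of_ne x hx1
    by_cases hox : onesCount x ≤ b * ℓ - k
    · -- Case B: mixed block exists
      have hmix : ∃ j₀ : Fin b, ¬ blockAllOnes b ℓ x j₀ ∧ ¬ blockAllZeros b ℓ x j₀ := by
        by_contra hc
        apply hset
        right
        refine ⟨hox, fun j => ?_⟩
        by_contra hj
        push_neg at hj
        exact hc ⟨j, hj.1, hj.2⟩
      obtain ⟨j₀, hj1, hj2⟩ := hmix
      obtain ⟨p, hp1, hp2⟩ := aux_ceil ℓ (onesCount x) hℓ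
      have hdvd : ℓ ∣ (b * ℓ - k) := Nat.dvd_of_mod_eq_zero hmod
      have hm : (b * ℓ - k) / ℓ * ℓ = b * ℓ - k := Nat.div_mul_cancel hdvd
      have hpm : p ≤ (b * ℓ - k) / ℓ := hp2 _ (by omega)
      have hpln : p * ℓ ≤ b * ℓ - k := by
        have := Nat.mul_le_mul_right ℓ hpm
        omega
      have hpb : p ≤ b := by
        by_contra hcon
        push_neg at hcon
        have : b * ℓ ≤ p * ℓ := Nat.mul_le_mul_right _ (by omega)
        omega
      have hM2 := aux_M2 hℓ x j₀ hj1 hj2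
      have hzb : zcnt b ℓ x + p ≤ b := by
        have hoxc : onesCount x ≤ (b - zcnt b ℓ x) * ℓ := by
          have hzle : zcnt b ℓ x ≤ b := by
            have := aux_M1 hℓ x
            nlinarith [hℓ]
          have hexp : (b - zcnt b ℓ x) * ℓ + zcnt b ℓ x * ℓ = b * ℓ := by
            rw [← Nat.add_mul]; congr 1; omega
          have hcm : zcnt b ℓ x * ℓ = ℓ * zcnt b ℓ x := Nat.mul_comm _ _
          omega
        have := hp2 _ hoxc
        have hzle : zcnt b ℓ x ≤ b := by
          have := aux_M1 hℓ x
          nlinarith [hℓ]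
        omega
      set y := ypat b ℓ p with hy
      have hoy : onesCount y = p * ℓ := aux_ypat_ones hℓ p hpb
      have hzy : zcnt b ℓ y + p = b := aux_ypat_zcnt hℓ p hpb
      have f1y : oneJump (b * ℓ) k y = k + p * ℓ := by
        rw [oneJump, if_pos (Or.inl (by omega)), hoy]
      have f1x : oneJump (b * ℓ) k x = k + onesCount x := by
        rw [oneJump, if_pos (Or.inl hox)]
      have hzzy : zcnt b ℓ x ≤ zcnt b ℓ y := by omega
      refine hpar y ⟨?_, ?_, ?_⟩
      · rw [f1x, f1y]; omega
      · rw [hzrr, hzrr]; exact Nat.mul_le_mul_left _ hzzy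
      · by_cases hpe : p * ℓ = onesCount x
        · right
          rw [hzrr, hzrr]
          have hstrict : zcnt b ℓ x < zcnt b ℓ y := by
            by_contra hcon
            push_neg at hcon
            have hzeq : zcnt b ℓ x = zcnt b ℓ y := le_antisymm hzzy hcon
            -- then onesCount x + ℓ * z < b*ℓ but p*ℓ = ox and z = b - p
            have h1 : ℓ * zcnt b ℓ y + ℓ * p = ℓ * b := by
              rw [← Nat.mul_add, hzy]
            have h2 : ℓ * p = p * ℓ := Nat.mul_comm _ _
            have h3 : ℓ * b = b * ℓ := Nat.mul_comm _ _
            rw [hzeq] at hM2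
            omega
          exact Nat.mul_lt_mul_of_pos_left hstrict hℓ
        · left
          rw [f1x, f1y]
          omega
    · -- Case A
      set m := (b * ℓ - k) / ℓ with hmdef
      have hdvd : ℓ ∣ (b * ℓ - k) := Nat.dvd_of_mod_eq_zero hmod
      have hm : m * ℓ = b * ℓ - k := Nat.div_mul_cancel hdvd
      have hmb : m ≤ b := by
        by_contra hcon
        push_neg at hcon
        have : b * ℓ ≤ m * ℓ := Nat.mul_le_mul_right _ (by omega)
        omega
      set y := ypat b ℓ m with hy
      have hoy : onesCount y = m * ℓ := aux_ypat_ones hℓ m hmb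
      have hzy : zcnt b ℓ y + m = b := aux_ypat_zcnt hℓ m hmb
      have f1y : oneJump (b * ℓ) k y = k + (b * ℓ - k) := by
        rw [oneJump, if_pos (Or.inl (by omega)), hoy, hm]
      have f2y : zeroRoyalRoad b ℓ y = k := by
        rw [hzrr]
        have h1 : ℓ * zcnt b ℓ y + ℓ * m = ℓ * b := by rw [← Nat.mul_add, hzy]
        have h2 : ℓ * m = m * ℓ := Nat.mul_comm _ _
        have h3 : ℓ * b = b * ℓ := Nat.mul_comm _ _
        omega
      have f1x : oneJump (b * ℓ) k x = b * ℓ - onesCount x := by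
        rw [oneJump, if_neg (not_or.mpr ⟨hox, hx1⟩)]
      have f2x : zeroRoyalRoad b ℓ x ≤ b * ℓ - onesCount x := by
        rw [hzrr]
        have h1 := aux_zeros_ge hℓ x
        have h2 := aux_onesCount_add_zerosCount x
        omega
      refine hpar y ⟨?_, ?_, Or.inl ?_⟩
      · rw [f1x, f1y]; omega
      · rw [f2y]; omega
      · rw [f1x, f1y]; omega
  · -- backward
    intro h
    rcases h with h | ⟨hox, hmono⟩
    · -- x = 1^n
      subst h
      intro y hdom
      obtain ⟨h1, h2, h3⟩ := hdom
      have f1x : oneJump (b * ℓ) k (fun _ : Fin (b * ℓ) => true) = k + b * ℓ := by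
        rw [oneJump, if_pos (Or.inr rfl), aux_const_true_ones]
      by_cases hy : y = (fun _ : Fin (b * ℓ) => true)
      · subst hy
        rcases h3 with h3 | h3 <;> exact absurd h3 (lt_irrefl _)
      · have hoylt : onesCount y < b * ℓ := aux_ones_lt_of_ne y hy
        by_cases hoy : onesCount y ≤ b * ℓ - k
        · have f1y : oneJump (b * ℓ) k y = k + onesCount y := by
            rw [oneJump, if_pos (Or.inl hoy)]
          rw [f1x, f1y] at h1
          omega
        · have f1y : oneJump (b * ℓ) k y = b * ℓ - onesCount y := by
            rw [oneJump, if_neg (not_or.mpr ⟨hoy, hy⟩)]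
          rw [f1x, f1y] at h1
          omega
    · -- monochrome
      have hmeq := aux_mono_eq hℓ x hmono
      intro y hdom
      obtain ⟨h1, h2, h3⟩ := hdom
      have f1x : oneJump (b * ℓ) k x = k + onesCount x := by
        rw [oneJump, if_pos (Or.inl hox)]
      rw [hzrr x, hzrr y] at h2 h3
      by_cases hy : y = (fun _ : Fin (b * ℓ) => true)
      · rw [hy, aux_zcnt_true hℓ, Nat.mul_zero, Nat.le_zero] at h2
        have hz0 : zcnt b ℓ x = 0 := by
          rcases Nat.mul_eq_zero.mp h2 with h | h
          · omega
          · exact h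
        rw [hz0] at hmeq
        omega
      · by_cases hoy : onesCount y ≤ b * ℓ - k
        · have f1y : oneJump (b * ℓ) k y = k + onesCount y := by
            rw [oneJump, if_pos (Or.inl hoy)]
          rw [f1x, f1y] at h1 h3
          have hM1 := aux_M1 hℓ y
          omega
        · have f1y : oneJump (b * ℓ) k y = b * ℓ - onesCount y := by
            rw [oneJump, if_neg (not_or.mpr ⟨hoy, hy⟩)]
          rw [f1x, f1y] at h1
          omega
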